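/- arXiv:2009.05969 — 7 statements merged into one kernel-verified Lean document; each statement's English description precedes it below -/
import Mathlib

section
/- Let n ≥ r(k-1)+1 and 0 ≤ s < k. Then the equitable r-colorability defect with parameter s of the family of all k-subsets of [n] equals n - r(k-s-1). -/
open Finset

/-- `A ⊆ₛ B`: there exists `E` with `|E| ≤ s` and `A \ E ⊆ B`. -/
def subS {α : Type*} [DecidableEq α] (s : ℕ) (A B : Finset α) : Prop :=
  ∃ E : Finset α, E.card ≤ s ∧ A \ E ⊆ B

/-- `X` is an equitable partition of `G` (pairwise disjoint parts, union `G`,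
part sizes pairwise differing by at most 1). -/
def EquitableParts {ι α : Type*} [Fintype ι] [DecidableEq α]
    (G : Finset α) (X : ι → Finset α) : Prop :=
  (∀ i j, i ≠ j → Disjoint (X i) (X j)) ∧
  Finset.univ.biUnion X = G ∧
  ∀ i j, (X i).card ≤ (X j).card + 1

/-- Generalized equitable `r`-colorability defect `ecd^r(F, s)` on ground set `G`. -/
noncomputable def ecd {α : Type*} [DecidableEq α] (G : Finset α) (r s : ℕ)
    (F : Set (Finset α)) : ℕ :=
  sInf {m | ∃ X0 ⊆ G, X0.card = m ∧ ∃ X : Fin r → Finset α,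
    EquitableParts (G \ X0) X ∧ ∀ A ∈ F, ∀ i, ¬ subS s A (X i)}

/-- Equitable `r`-colorability defect (plain containment). -/
noncomputable def ecd0 {α : Type*} [DecidableEq α] (G : Finset α) (r : ℕ)
    (F : Set (Finset α)) : ℕ :=
  sInf {m | ∃ X0 ⊆ G, X0.card = m ∧ ∃ X : Fin r → Finset α,
    EquitableParts (G \ X0) X ∧ ∀ A ∈ F, ∀ i, ¬ A ⊆ X i}

/-- The family of all `k`-subsets of `[n] = {1, …, n}`. -/
def kSubsets (n k : ℕ) : Set (Finset ℕ) :=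
  {F | F ⊆ Finset.Icc 1 n ∧ F.card = k}

/-- The family `H(n,k,a,s)` of `k`-subsets `F` of `[n]` with `F ⊄ₛ {n-a+1,…,n}`. -/
def Hfam (n k a s : ℕ) : Set (Finset ℕ) :=
  {F | F ⊆ Finset.Icc 1 n ∧ F.card = k ∧ ¬ subS s F (Finset.Icc (n - a + 1) n)}

/-- The family of `t`-wide `k`-subsets of `[n]`. -/
def tWide (n k t : ℕ) : Set (Finset ℕ) :=
  {F | F ⊆ Finset.Icc 1 n ∧ F.card = k ∧
    ∀ i ∈ Finset.Icc 1 (n - t + 1), ¬ F ⊆ Finset.Icc i (i + t - 1)}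

/-- `P` is a partition of `[n]` into pairwise disjoint pieces. -/
def IsPartition (n : ℕ) (P : Finset (Finset ℕ)) : Prop :=
  (∀ p ∈ P, ∀ q ∈ P, p ≠ q → Disjoint p q) ∧ P.sup id = Finset.Icc 1 n

/-- `A` is `P`-admissible: it meets every part of `P` in at most one element. -/
def Adm (P : Finset (Finset ℕ)) (A : Finset ℕ) : Prop :=
  ∀ p ∈ P, (A ∩ p).card ≤ 1

theorem stmt0 (n r k s : ℕ) (hn1 : 1 ≤ n) (hr : 2 ≤ r)
    (hn : r * (k - 1) + 1 ≤ n) (hs : s < k) :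
    ecd (Finset.Icc 1 n) r s (kSubsets n k) = n - r * (k - s - 1) := by
  set t := k - s - 1 with ht
  have hkn : k ≤ n := by
    have h2 : 2 * (k - 1) ≤ r * (k - 1) := Nat.mul_le_mul_right _ hr
    omega
  have hrt : r * t ≤ n := by
    have : r * t ≤ r * (k - 1) := Nat.mul_le_mul_left _ (by omega)
    omega
  -- the witness partition
  have hmem : n - r * t ∈ {m | ∃ X0 ⊆ Finset.Icc 1 n, X0.card = m ∧
      ∃ X : Fin r → Finset ℕ, EquitableParts (Finset.Icc 1 n \ X0) X ∧
      ∀ A ∈ kSubsets n k, ∀ i, ¬ subS s A (X i)} := by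
    refine ⟨Finset.Icc (r * t + 1) n, ?_, ?_, fun i => Finset.Icc ((i : ℕ) * t + 1) (((i : ℕ) + 1) * t), ?_, ?_⟩
    · intro x hx
      simp only [Finset.mem_Icc] at hx ⊢
      omega
    · rw [Nat.card_Icc]; omega
    · have hG : Finset.Icc 1 n \ Finset.Icc (r * t + 1) n = Finset.Icc 1 (r * t) := by
        ext x
        simp only [Finset.mem_sdiff, Finset.mem_Icc]
        omega
      rw [hG]
      have hcard : ∀ i : Fin r, (Finset.Icc ((i : ℕ) * t + 1) (((i : ℕ) + 1) * t)).card = t := by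
        intro i
        rw [Nat.card_Icc]
        have : ((i : ℕ) + 1) * t = (i : ℕ) * t + t := by ring
        omega
      refine ⟨?_, ?_, ?_⟩
      · intro i j hij
        rw [Finset.disjoint_left]
        intro a hai haj
        simp only [Finset.mem_Icc] at hai haj
        rcases lt_or_gt_of_ne (fun h : (i : ℕ) = (j : ℕ) => hij (Fin.ext h)) with h | h
        · have : ((i : ℕ) + 1) * t ≤ (j : ℕ) * t := Nat.mul_le_mul_right _ (by omega)
          omega
        · have : ((j : ℕ) + 1) * t ≤ (i : ℕ) * t := Nat.mul_le_mul_right _ (by omega)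
          omega
      · ext x
        simp only [Finset.mem_biUnion, Finset.mem_univ, true_and, Finset.mem_Icc]
        constructor
        · rintro ⟨i, h1, h2⟩
          have : ((i : ℕ) + 1) * t ≤ r * t := Nat.mul_le_mul_right _ (by omega)
          omega
        · rintro ⟨hx1, hx2⟩
          have ht0 : 0 < t := by
            rcases Nat.eq_zero_or_pos t with h | h
            · rw [h, mul_zero] at hx2; omega
            · exact h
          have hlt : (x - 1) / t < r := (Nat.div_lt_iff_lt_mul ht0).2 (by omega)
          refine ⟨⟨(x - 1) / t, hlt⟩, ?_, ?_⟩
          · have := Nat.div_mul_le_self (x - 1) t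
            simp only [Fin.val_mk]
            omega
          · have hmod := Nat.mod_lt (x - 1) ht0
            have hdm := Nat.div_add_mod (x - 1) t
            simp only [Fin.val_mk]
            have he : ((x - 1) / t + 1) * t = t * ((x - 1) / t) + t := by ring
            omega
      · intro i j
        rw [hcard i, hcard j]
        omega
    · rintro A ⟨hA, hAcard⟩ i ⟨E, hE, hsub⟩
      have h1 : (A \ E).card ≤ t := by
        have := Finset.card_le_card hsub
        rw [Nat.card_Icc] at this
        have he : ((i : ℕ) + 1) * t = (i : ℕ) * t + t := by ring
        omega
      have h2 : A.card ≤ (A \ E).card + E.card := Finset.card_le_card_sdiff_add_card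
      omega
  refine le_antisymm (Nat.sInf_le hmem) (le_csInf ⟨_, hmem⟩ ?_)
  rintro m ⟨X0, hX0, hX0card, X, ⟨hdisj, hunion, _⟩, hno⟩
  have hXsub : ∀ i, X i ⊆ Finset.Icc 1 n := by
    intro i x hx
    have : x ∈ Finset.univ.biUnion X := Finset.mem_biUnion.2 ⟨i, Finset.mem_univ i, hx⟩
    rw [hunion] at this
    exact (Finset.mem_sdiff.1 this).1
  have hpart : ∀ i, (X i).card ≤ t := by
    intro i
    by_contra h
    push_neg at h
    have hks : k - s ≤ (X i).card := by omega
    obtain ⟨B, hBX, hBcard⟩ := Finset.exists_subset_card_eq hks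
    have hBsub : B ⊆ Finset.Icc 1 n := hBX.trans (hXsub i)
    obtain ⟨A, hBA, hAsub, hAcard⟩ := Finset.exists_subsuperset_card_eq (n := k) hBsub
      (by omega) (by rw [Nat.card_Icc]; omega)
    have hsubS : subS s A (X i) := by
      refine ⟨A \ B, ?_, ?_⟩
      · rw [Finset.card_sdiff_of_subset hBA, hAcard, hBcard]; omega
      · rw [Finset.sdiff_sdiff_self_left]
        exact (Finset.inter_subset_right).trans hBX
    exact hno A ⟨hAsub, hAcard⟩ i hsubS
  have hmn : m ≤ n := by
    have := Finset.card_le_card hX0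
    rw [Nat.card_Icc] at this
    omega
  have hsum : n - m = ∑ i : Fin r, (X i).card := by
    have h1 : (Finset.Icc 1 n \ X0).card = n - m := by
      rw [Finset.card_sdiff_of_subset hX0, Nat.card_Icc, hX0card]
      omega
    rw [← h1, ← hunion, Finset.card_biUnion (fun x _ y _ h => hdisj x y h)]
  have hle : ∑ i : Fin r, (X i).card ≤ r * t := by
    calc ∑ i : Fin r, (X i).card ≤ ∑ _i : Fin r, t := Finset.sum_le_sum (fun i _ => hpart i)
    _ = r * t := by simp [mul_comm]
  omega
end

section
/- Let n ≥ rk, k,r ≥ 2, 0 ≤ s < k, n > a+s, and a ≤ k-s-1. Then ecd^r(H(n,k,a,s), s) = n - r(k-s-1). -/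
open Finset

/-- A `k`-set cannot be `s`-almost contained in a set that is too small. -/
lemma not_subS_of_card {F B : Finset ℕ} {k s : ℕ} (hF : k ≤ F.card) (hB : B.card + s < k) :
    ¬ subS s F B := by
  rintro ⟨E, hE, hsub⟩
  have h1 := Finset.card_le_card hsub
  have h2 := Finset.card_le_card_sdiff_add_card (s := F) (t := E)
  omega

lemma interval_disjoint (t p q : ℕ) (hpq : p ≠ q) :
    Disjoint (Finset.Icc (p * t + 1) (p * t + t)) (Finset.Icc (q * t + 1) (q * t + t)) := by
  rw [Finset.disjoint_left]
  intro x hx hx'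
  simp only [Finset.mem_Icc] at hx hx'
  rcases lt_or_gt_of_ne hpq with h | h
  · have h1 : (p + 1) * t ≤ q * t := Nat.mul_le_mul_right t h
    rw [add_mul, one_mul] at h1
    omega
  · have h1 : (q + 1) * t ≤ p * t := Nat.mul_le_mul_right t h
    rw [add_mul, one_mul] at h1
    omega

/-- The key membership witness: `n - r*(k-s-1)` is achievable. -/
lemma mem_aux (n r k s a : ℕ) (hs : s < k) (hrt : r * (k - s - 1) ≤ n) :
    (n - r * (k - s - 1)) ∈ {m | ∃ X0 ⊆ Finset.Icc 1 n, X0.card = m ∧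
      ∃ X : Fin r → Finset ℕ, EquitableParts (Finset.Icc 1 n \ X0) X ∧
        ∀ A ∈ Hfam n k a s, ∀ i, ¬ subS s A (X i)} := by
  obtain ⟨t, ht⟩ : ∃ t, k - s - 1 = t := ⟨_, rfl⟩
  have htk : t + s + 1 = k := by omega
  rw [ht]
  rw [ht] at hrt
  refine ⟨Finset.Icc (r * t + 1) n, Finset.Icc_subset_Icc (by omega) le_rfl, ?_,
    fun i => Finset.Icc ((i : ℕ) * t + 1) ((i : ℕ) * t + t), ⟨?_, ?_, ?_⟩, ?_⟩
  · rw [Nat.card_Icc]; omega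
  · intro i j hij
    exact interval_disjoint t i j (by simpa [Fin.val_injective.ne_iff] using hij)
  · ext x
    simp only [Finset.mem_biUnion, Finset.mem_univ, true_and, Finset.mem_sdiff,
      Finset.mem_Icc]
    constructor
    · rintro ⟨i, h1, h2⟩
      have h3 : ((i : ℕ) + 1) * t ≤ r * t := Nat.mul_le_mul_right t i.isLt
      rw [add_mul, one_mul] at h3
      omega
    · rintro ⟨⟨hx1, hx2⟩, hx3⟩
      have hx4 : x ≤ r * t := by omega
      have htpos : 0 < t := by
        rcases Nat.eq_zero_or_pos t with h | h
        · have hz : r * t = 0 := by rw [h, mul_zero]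
          omega
        · exact h
      obtain ⟨q, hq⟩ : ∃ q, (x - 1) / t = q := ⟨_, rfl⟩
      have hd := Nat.div_add_mod (x - 1) t
      have hm := Nat.mod_lt (x - 1) htpos
      rw [hq] at hd
      have hqr : q < r := by
        have hc : r * t = t * r := mul_comm r t
        have h5 : t * q < t * r := by omega
        exact Nat.lt_of_mul_lt_mul_left h5
      refine ⟨⟨q, hqr⟩, ?_⟩
      show q * t + 1 ≤ x ∧ x ≤ q * t + t
      have h6 : q * t = t * q := mul_comm _ _
      omega
  · intro i j
    simp only [Nat.card_Icc]
    omega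
  · rintro A ⟨-, hAcard, -⟩ i
    exact not_subS_of_card (k := k) (le_of_eq hAcard.symm)
      (by rw [Nat.card_Icc]; omega)

theorem stmt1 (n r k s a : ℕ) (hk : 2 ≤ k) (hr : 2 ≤ r) (hn : r * k ≤ n)
    (hs : s < k) (hna : a + s < n) (ha : a ≤ k - s - 1) :
    ecd (Finset.Icc 1 n) r s (Hfam n k a s) = n - r * (k - s - 1) := by
  have hrt : r * (k - s - 1) ≤ n := le_trans (Nat.mul_le_mul_left r (by omega)) hn
  have hkn : k ≤ n := le_trans (Nat.le_mul_of_pos_left k (by omega)) hn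
  have hmem := mem_aux n r k s a hs hrt
  refine le_antisymm (Nat.sInf_le hmem) (le_csInf ⟨_, hmem⟩ ?_)
  rintro m ⟨X0, hX0, hX0c, X, ⟨hdisj, hunion, -⟩, hcond⟩
  by_contra hlt
  push_neg at hlt
  have hmn : m + r * (k - s - 1) < n := by omega
  -- total size of the parts
  have hXiub : ∀ i, X i ⊆ Finset.Icc 1 n := by
    intro i
    have h1 := Finset.subset_biUnion_of_mem X (Finset.mem_univ i)
    rw [hunion] at h1
    exact h1.trans (Finset.sdiff_subset)
  have hcardsd : (Finset.Icc 1 n \ X0).card = n - m := by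
    rw [Finset.card_sdiff_of_subset hX0, Nat.card_Icc, hX0c]
    omega
  have hsum : ∑ i, (X i).card = n - m := by
    rw [← Finset.card_biUnion (fun i _ j _ h => hdisj i j h), hunion, hcardsd]
  -- some part has at least k - s elements
  have hbig : ∃ i, k - s ≤ (X i).card := by
    by_contra h
    push_neg at h
    have h2 : ∑ i, (X i).card ≤ Finset.univ.card • (k - s - 1) :=
      Finset.sum_le_card_nsmul _ _ _ (fun i _ => by have := h i; omega)
    simp only [Finset.card_univ, Fintype.card_fin, smul_eq_mul] at h2
    omega
  obtain ⟨i, hi⟩ := hbig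
  obtain ⟨S, hS, hScard⟩ := Finset.exists_subset_card_eq hi
  have hSn : S ⊆ Finset.Icc 1 n := hS.trans (hXiub i)
  have hTcard : s ≤ (Finset.Icc 1 n \ S).card := by
    rw [Finset.card_sdiff_of_subset hSn, Nat.card_Icc, hScard]
    omega
  obtain ⟨T, hT, hTc⟩ := Finset.exists_subset_card_eq hTcard
  have hdisjST : Disjoint S T :=
    Finset.disjoint_left.mpr fun x hxS hxT => (Finset.mem_sdiff.mp (hT hxT)).2 hxS
  have hFcard : (S ∪ T).card = k := by
    rw [Finset.card_union_of_disjoint hdisjST, hScard, hTc]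
    omega
  have hFsub : S ∪ T ⊆ Finset.Icc 1 n :=
    Finset.union_subset hSn (hT.trans Finset.sdiff_subset)
  have hFmem : S ∪ T ∈ Hfam n k a s := by
    refine ⟨hFsub, hFcard, not_subS_of_card (le_of_eq hFcard.symm) ?_⟩
    rw [Nat.card_Icc]
    omega
  refine hcond (S ∪ T) hFmem i ⟨T, le_of_eq hTc, ?_⟩
  intro x hx
  rw [Finset.mem_sdiff, Finset.mem_union] at hx
  exact hS (hx.1.resolve_right hx.2)
end

section
/- Let n ≥ rk, k,r ≥ 2, 0 ≤ s < k, n > a+s, and k-s ≤ a ≤ r(k-s)-2. Then ecd^r(H(n,k,a,s), s) = n - r(k-s-1) - ⌊a/(k-s)⌋. -/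
open Finset

lemma subS_iff_card {α : Type*} [DecidableEq α] {F B : Finset α} {s : ℕ} :
    subS s F B ↔ (F \ B).card ≤ s := by
  constructor
  · rintro ⟨E, hE, h⟩
    refine le_trans (Finset.card_le_card ?_) hE
    intro x hx
    simp only [Finset.mem_sdiff] at hx
    by_contra hxE
    exact hx.2 (h (Finset.mem_sdiff.mpr ⟨hx.1, hxE⟩))
  · intro h
    refine ⟨F \ B, h, ?_⟩
    intro x hx
    simp only [Finset.mem_sdiff, not_and, not_not] at hx
    exact hx.2 hx.1

lemma mem_Hfam {n k a s : ℕ} {F : Finset ℕ} :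
    F ∈ Hfam n k a s ↔ F ⊆ Finset.Icc 1 n ∧ F.card = k ∧
      s < (F \ Finset.Icc (n - a + 1) n).card := by
  simp only [Hfam, Set.mem_setOf_eq, subS_iff_card, not_le]

lemma badpart (n k s a : ℕ) (hs : s < k) (hna : a + s < n) (hat : k - s ≤ a)
    (B : Finset ℕ) (hB : B ⊆ Finset.Icc 1 n) (hBc : k - s ≤ B.card)
    (hBA : ¬ B ⊆ Finset.Icc (n - a + 1) n) :
    ∃ F ∈ Hfam n k a s, subS s F B := by
  set A := Finset.Icc (n - a + 1) n with hAdef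
  set t := k - s with htdef
  have ht1 : 1 ≤ t := by omega
  have han : a < n := by omega
  have hBAne : (B \ A).Nonempty := by rwa [Finset.sdiff_nonempty]
  have hBAsub : B \ A ⊆ Finset.Icc 1 (n - a) := by
    intro x hx
    simp only [Finset.mem_sdiff, hAdef, Finset.mem_Icc] at hx
    have := hB hx.1
    simp only [Finset.mem_Icc] at this ⊢
    omega
  have hcardBA : (B \ A).card ≤ n - a := by
    have := Finset.card_le_card hBAsub
    simpa [Nat.card_Icc] using this
  set u := min (B \ A).card t with hudef
  have hu1 : 1 ≤ u := by
    have := Finset.card_pos.mpr hBAne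
    omega
  have hut : u ≤ t := min_le_right _ _
  obtain ⟨T1, hT1sub, hT1card⟩ :=
    Finset.exists_subset_card_eq (show u ≤ (B \ A).card from min_le_left _ _)
  have hsplitB := Finset.card_inter_add_card_sdiff B A
  obtain ⟨T2, hT2sub, hT2card⟩ :=
    Finset.exists_subset_card_eq (show t - u ≤ (B ∩ A).card by omega)
  set e1 := min s (n - a - u) with he1def
  set e2 := s - e1 with he2def
  have hT1in : T1 ⊆ Finset.Icc 1 (n - a) := hT1sub.trans hBAsub
  obtain ⟨E1, hE1sub, hE1card⟩ :=
    Finset.exists_subset_card_eq (show e1 ≤ (Finset.Icc 1 (n - a) \ T1).card by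
      rw [Finset.card_sdiff_of_subset hT1in, Nat.card_Icc]
      omega)
  have hT2A : T2 ⊆ A := hT2sub.trans Finset.inter_subset_right
  have hAcard : A.card = a := by rw [hAdef, Nat.card_Icc]; omega
  obtain ⟨E2, hE2sub, hE2card⟩ :=
    Finset.exists_subset_card_eq (show e2 ≤ (A \ T2).card by
      rw [Finset.card_sdiff_of_subset hT2A, hAcard]
      omega)
  -- locate pieces
  have hE1in : E1 ⊆ Finset.Icc 1 (n - a) := hE1sub.trans Finset.sdiff_subset
  have hE2A : E2 ⊆ A := hE2sub.trans Finset.sdiff_subset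
  have hinA : ∀ x, x ∈ Finset.Icc 1 (n - a) → x ∈ A → False := by
    intro x h1 h2
    simp only [Finset.mem_Icc, hAdef] at h1 h2
    omega
  have d_T1E1 : Disjoint T1 E1 := by
    rw [Finset.disjoint_left]
    intro x hx1 hx2
    have := hE1sub hx2
    simp only [Finset.mem_sdiff] at this
    exact this.2 hx1
  have d_T2E2 : Disjoint T2 E2 := by
    rw [Finset.disjoint_left]
    intro x hx1 hx2
    have := hE2sub hx2
    simp only [Finset.mem_sdiff] at this
    exact this.2 hx1
  have d_big : Disjoint (T1 ∪ E1) (T2 ∪ E2) := by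
    rw [Finset.disjoint_left]
    intro x hx1 hx2
    rw [Finset.mem_union] at hx1 hx2
    have h1 : x ∈ Finset.Icc 1 (n - a) := by
      rcases hx1 with h | h
      · exact hT1in h
      · exact hE1in h
    have h2 : x ∈ A := by
      rcases hx2 with h | h
      · exact hT2A h
      · exact hE2A h
    exact hinA x h1 h2
  set F := (T1 ∪ E1) ∪ (T2 ∪ E2) with hFdef
  have hFcard : F.card = k := by
    rw [hFdef, Finset.card_union_of_disjoint d_big,
      Finset.card_union_of_disjoint d_T1E1, Finset.card_union_of_disjoint d_T2E2,
      hT1card, hE1card, hT2card, hE2card]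
    omega
  have hFsub : F ⊆ Finset.Icc 1 n := by
    intro x hx
    rw [hFdef, Finset.mem_union, Finset.mem_union, Finset.mem_union] at hx
    have : x ∈ Finset.Icc 1 (n - a) ∨ x ∈ A := by tauto
    simp only [Finset.mem_Icc, hAdef] at this ⊢
    omega
  have hFA : F ∩ A ⊆ T2 ∪ E2 := by
    intro x hx
    rw [Finset.mem_inter, hFdef, Finset.mem_union, Finset.mem_union, Finset.mem_union] at hx
    rcases hx.1 with (h | h) | h
    · exact absurd (hinA x (hT1in h) hx.2) (by simp)
    · exact absurd (hinA x (hE1in h) hx.2) (by simp)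
    · rwa [Finset.mem_union]
  have hFAcard : (F ∩ A).card ≤ t - 1 := by
    have h1 := Finset.card_le_card hFA
    have h2 := Finset.card_union_le (T2) (E2)
    rw [hT2card, hE2card] at h2
    omega
  have hsplitF := Finset.card_inter_add_card_sdiff F A
  refine ⟨F, ?_, ?_⟩
  · rw [mem_Hfam, ← hAdef]
    exact ⟨hFsub, hFcard, by omega⟩
  · rw [subS_iff_card]
    have hFB : F \ B ⊆ E1 ∪ E2 := by
      intro x hx
      rw [Finset.mem_sdiff, hFdef, Finset.mem_union, Finset.mem_union, Finset.mem_union] at hx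
      rcases hx.1 with (h | h) | (h | h)
      · exact absurd (hT1sub h) (by simp only [Finset.mem_sdiff, not_and]; intro hB'; exact absurd hB' (by simpa using hx.2))
      · exact Finset.mem_union_left _ h
      · exact absurd ((Finset.inter_subset_left) (hT2sub h)) hx.2
      · exact Finset.mem_union_right _ h
    have h1 := Finset.card_le_card hFB
    have h2 := Finset.card_union_le E1 E2
    rw [hE1card, hE2card] at h2
    omega

lemma arith1 (r t a : ℕ) (ht : 1 ≤ t) (ha : a + 2 ≤ r * t) : a ≤ r * (t - 1) + a / t := by
  obtain ⟨t', rfl⟩ : ∃ t', t = t' + 1 := ⟨t - 1, by omega⟩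
  simp only [Nat.add_sub_cancel]
  have hq : a / (t' + 1) < r := by
    rw [Nat.div_lt_iff_lt_mul (by omega)]
    have : r * (t' + 1) = (t' + 1) * r := by ring
    omega
  have hmod := Nat.div_add_mod a (t' + 1)
  have hmodlt : a % (t' + 1) < t' + 1 := Nat.mod_lt _ (by omega)
  have h2 : t' * (a / (t' + 1) + 1) ≤ t' * r := Nat.mul_le_mul_left t' hq
  have h3 : t' * (a / (t' + 1) + 1) = t' * (a / (t' + 1)) + t' := by ring
  have h4 : t' * r = r * t' := by ring
  have h5 : (t' + 1) * (a / (t' + 1)) = t' * (a / (t' + 1)) + a / (t' + 1) := by ring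
  omega

theorem stmt2 (n r k s a : ℕ) (hk : 2 ≤ k) (hr : 2 ≤ r) (hn : r * k ≤ n)
    (hs : s < k) (hna : a + s < n) (ha1 : k - s ≤ a) (ha2 : a ≤ r * (k - s) - 2) :
    ecd (Finset.Icc 1 n) r s (Hfam n k a s) = n - r * (k - s - 1) - a / (k - s) := by
  set t := k - s with htdef
  have ht1 : 1 ≤ t := by omega
  set q := a / t with hqdef
  have hq1 : 1 ≤ q := by
    rw [hqdef, Nat.le_div_iff_mul_le (by omega)]
    omega
  have hrt2 : 2 ≤ r * t := le_trans (by omega) (Nat.mul_le_mul hr ht1)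
  have hart : a + 2 ≤ r * t := by omega
  have hqr : q + 1 ≤ r := by
    have : a / t < r := by
      rw [Nat.div_lt_iff_lt_mul (by omega)]
      have : r * t = t * r := by ring
      omega
    omega
  have hqt : q * t ≤ a := by
    rw [hqdef]
    have := Nat.div_mul_le_self a t
    omega
  set tot := r * (t - 1) + q with htotdef
  have htot_n : tot ≤ n := by
    have h1 : r * t ≤ r * k := Nat.mul_le_mul_left r (by omega)
    have h2 : r * (t - 1) + r * 1 = r * t := by
      rw [← Nat.mul_add]; congr 1; omega
    omega
  -- block offsets
  set off : ℕ → ℕ := fun i => if i ≤ q then i * t else q * t + (i - q) * (t - 1) with hoffdef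
  have hoff0 : off 0 = 0 := by simp [hoffdef]
  have hoffr : off r = tot := by
    have hrq : ¬ r ≤ q := by omega
    simp only [hoffdef, if_neg hrq]
    have e1 : (r - q) * (t - 1) + q * (t - 1) = r * (t - 1) := by
      rw [← Nat.add_mul]; congr 1; omega
    have e2 : q * t = q * (t - 1) + q * 1 := by
      rw [← Nat.mul_add]; congr 1; omega
    omega
  have hmono : ∀ i j : ℕ, i ≤ j → off i ≤ off j := by
    intro i j hij
    simp only [hoffdef]
    split_ifs with h1 h2 h2
    · exact Nat.mul_le_mul_right t hij
    · have h3 : i * t ≤ q * t := Nat.mul_le_mul_right t h1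
      omega
    · omega
    · have h3 : (i - q) * (t - 1) ≤ (j - q) * (t - 1) :=
        Nat.mul_le_mul_right _ (by omega)
      omega
  have hstep : ∀ i : ℕ, off (i + 1) = off i + (if i < q then t else t - 1) := by
    intro i
    rcases lt_trichotomy i q with h | h | h
    · have h1 : i + 1 ≤ q := by omega
      simp only [hoffdef, if_pos h1, if_pos (le_of_lt h), if_pos h]
      ring
    · have h1 : ¬ i + 1 ≤ q := by omega
      simp only [hoffdef, if_neg h1, if_pos (le_of_eq h), if_neg (show ¬ i < q by omega)]
      have h2 : i + 1 - q = 1 := by omega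
      rw [h2, one_mul, h]
    · have h1 : ¬ i + 1 ≤ q := by omega
      have h2 : ¬ i ≤ q := by omega
      have h3 : ¬ i < q := by omega
      simp only [hoffdef, if_neg h1, if_neg h2, if_neg h3]
      have h4 : i + 1 - q = (i - q) + 1 := by omega
      rw [h4]
      ring
  have hofftop : ∀ i : ℕ, i ≤ r → off i ≤ n := by
    intro i hi
    have := hmono i r hi
    omega
  -- the parts
  set X : Fin r → Finset ℕ :=
    fun i => Finset.Icc (n - off (↑i + 1) + 1) (n - off ↑i) with hXdef
  have hXcard : ∀ i : Fin r, (X i).card = (if (i : ℕ) < q then t else t - 1) := by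
    intro i
    have hs' := hstep (i : ℕ)
    have h2 : off ((i : ℕ) + 1) ≤ n := hofftop _ (by omega)
    rw [hXdef]
    rw [Nat.card_Icc]
    omega
  set X0 : Finset ℕ := Finset.Icc 1 (n - tot) with hX0def
  have hmem : (n - r * (t - 1) - q) ∈
      {m | ∃ X0 ⊆ Finset.Icc 1 n, X0.card = m ∧ ∃ X : Fin r → Finset ℕ,
        EquitableParts (Finset.Icc 1 n \ X0) X ∧
        ∀ A ∈ Hfam n k a s, ∀ i, ¬ subS s A (X i)} := by
    refine ⟨X0, ?_, ?_, X, ⟨?_, ?_, ?_⟩, ?_⟩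
    · exact Finset.Icc_subset_Icc le_rfl (by omega)
    · rw [hX0def, Nat.card_Icc]
      omega
    · -- disjoint
      have key : ∀ i j : Fin r, (i : ℕ) < (j : ℕ) → Disjoint (X i) (X j) := by
        intro i j hij
        rw [Finset.disjoint_left]
        intro x hx1 hx2
        rw [hXdef, Finset.mem_Icc] at hx1 hx2
        have h1 := hmono ((i : ℕ) + 1) (j : ℕ) hij
        have h2 := hofftop (j : ℕ) (by omega)
        omega
      intro i j hne
      rcases lt_or_gt_of_ne (fun h => hne (Fin.ext h)) with h | h
      · exact key i j h
      · exact (key j i h).symm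
    · -- union
      have hsd : Finset.Icc 1 n \ X0 = Finset.Icc (n - tot + 1) n := by
        rw [hX0def]
        ext x
        simp only [Finset.mem_sdiff, Finset.mem_Icc]
        omega
      rw [hsd]
      ext x
      simp only [Finset.mem_biUnion, Finset.mem_univ, true_and, hXdef, Finset.mem_Icc]
      constructor
      · rintro ⟨i, h1, h2⟩
        have ha' := hofftop ((i : ℕ) + 1) (by omega)
        have hb := hmono ((i : ℕ) + 1) r (by omega)
        omega
      · rintro ⟨h1, h2⟩
        have hfind : ∀ j : ℕ, ∀ o : ℕ, o < off j →
            ∃ i, i < j ∧ off i ≤ o ∧ o < off (i + 1) := by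
          intro j
          induction j with
          | zero => intro o ho; rw [hoff0] at ho; omega
          | succ j ih =>
            intro o ho
            by_cases h : o < off j
            · obtain ⟨i, ha', hb, hc⟩ := ih o h
              exact ⟨i, by omega, hb, hc⟩
            · exact ⟨j, by omega, by omega, ho⟩
        obtain ⟨i, hir, hlo, hhi⟩ := hfind r (n - x) (by rw [hoffr]; omega)
        refine ⟨⟨i, hir⟩, ?_, ?_⟩
        · simp only []
          have := hofftop (i + 1) (by omega)
          omega
        · simp only []
          omega
    · -- sizes
      intro i j
      rw [hXcard i, hXcard j]
      split_ifs <;> omega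
    · -- condition
      intro F hF i hsub
      rw [mem_Hfam] at hF
      obtain ⟨hFsub, hFcard, hFA⟩ := hF
      rw [subS_iff_card] at hsub
      have hint := Finset.card_inter_add_card_sdiff F (X i)
      have h1 : t ≤ (F ∩ X i).card := by omega
      have h2 : t ≤ (X i).card :=
        le_trans h1 (Finset.card_le_card Finset.inter_subset_right)
      rw [hXcard i] at h2
      have hiq : (i : ℕ) < q := by
        by_contra hcon
        rw [if_neg hcon] at h2
        omega
      rw [if_pos hiq] at h2
      have hXA : X i ⊆ Finset.Icc (n - a + 1) n := by
        have hoffa : off ((i : ℕ) + 1) ≤ a := by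
          have e : off ((i : ℕ) + 1) = ((i : ℕ) + 1) * t := by
            simp only [hoffdef, if_pos (show (i : ℕ) + 1 ≤ q by omega)]
          have e2 : ((i : ℕ) + 1) * t ≤ q * t :=
            Nat.mul_le_mul_right t (by omega)
          omega
        intro x hx
        rw [hXdef, Finset.mem_Icc] at hx
        rw [Finset.mem_Icc]
        have := hmono (i : ℕ) ((i : ℕ) + 1) (by omega)
        omega
      have h3 : t ≤ (F ∩ Finset.Icc (n - a + 1) n).card := by
        refine le_trans h1 (Finset.card_le_card ?_)
        exact Finset.inter_subset_inter le_rfl hXA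
      have hintA := Finset.card_inter_add_card_sdiff F (Finset.Icc (n - a + 1) n)
      omega
  have hlow : ∀ m ∈ {m | ∃ Z0 ⊆ Finset.Icc 1 n, Z0.card = m ∧ ∃ Z : Fin r → Finset ℕ,
      EquitableParts (Finset.Icc 1 n \ Z0) Z ∧
      ∀ A ∈ Hfam n k a s, ∀ i, ¬ subS s A (Z i)}, n - r * (t - 1) - q ≤ m := by
    rintro m ⟨Z0, hZ0G, hZ0c, Y, ⟨hYdisj, hYun, hYequi⟩, hYcond⟩
    have hYsub : ∀ i, Y i ⊆ Finset.Icc 1 n := by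
      intro i x hx
      have hx2 : x ∈ Finset.univ.biUnion Y :=
        Finset.mem_biUnion.mpr ⟨i, Finset.mem_univ i, hx⟩
      rw [hYun] at hx2
      exact (Finset.mem_sdiff.mp hx2).1
    have hsum : ∑ i, (Y i).card = n - m := by
      rw [← Finset.card_biUnion (fun i _ j _ hij => hYdisj i j hij), hYun,
        Finset.card_sdiff_of_subset hZ0G, Nat.card_Icc, hZ0c]
      omega
    have hmn : m ≤ n := by
      have := Finset.card_le_card hZ0G
      rw [hZ0c, Nat.card_Icc] at this
      omega
    have hApart : ∀ i : Fin r, t ≤ (Y i).card → Y i ⊆ Finset.Icc (n - a + 1) n := by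
      intro i hi
      by_contra hcon
      obtain ⟨F, hFH, hFs⟩ := badpart n k s a hs hna ha1 (Y i) (hYsub i)
        (by omega) hcon
      exact hYcond F hFH i hFs
    set P := Finset.univ.filter (fun i : Fin r => t ≤ (Y i).card) with hPdef
    have hPsum : ∑ i ∈ P, (Y i).card ≤ a := by
      rw [← Finset.card_biUnion (fun i _ j _ hij => hYdisj i j hij)]
      have hsubA : P.biUnion Y ⊆ Finset.Icc (n - a + 1) n := by
        intro x hx
        obtain ⟨i, hiP, hxi⟩ := Finset.mem_biUnion.mp hx
        have hit : t ≤ (Y i).card := by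
          rw [hPdef] at hiP
          exact (Finset.mem_filter.mp hiP).2
        exact hApart i hit hxi
      have := Finset.card_le_card hsubA
      rw [Nat.card_Icc] at this
      omega
    have hPr : P.card ≤ r := by
      have h := Finset.card_le_univ P
      simpa using h
    have main : ∑ i, (Y i).card ≤ r * (t - 1) + q := by
      by_cases hPuniv : P = Finset.univ
      · have h1 : ∑ i, (Y i).card ≤ a := by
          rw [← hPuniv]
          exact hPsum
        have h2 := arith1 r t a ht1 hart
        omega
      · obtain ⟨j0, hj0⟩ : ∃ j0 : Fin r, j0 ∉ P := by
          by_contra h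
          push_neg at h
          exact hPuniv (Finset.eq_univ_iff_forall.mpr h)
        have hj0c : (Y j0).card + 1 ≤ t := by
          rw [hPdef, Finset.mem_filter] at hj0
          simp only [Finset.mem_univ, true_and, not_le] at hj0
          omega
        have hub : ∀ i ∈ P, (Y i).card ≤ t := fun i _ => le_trans (hYequi i j0) hj0c
        have hlb : ∀ i ∈ P, t ≤ (Y i).card := by
          intro i hi
          rw [hPdef] at hi
          exact (Finset.mem_filter.mp hi).2
        have h1 : ∑ i ∈ P, (Y i).card ≤ P.card * t := by
          calc ∑ i ∈ P, (Y i).card ≤ ∑ _i ∈ P, t := Finset.sum_le_sum hub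
          _ = P.card * t := by rw [Finset.sum_const, smul_eq_mul]
        have h2 : P.card * t ≤ ∑ i ∈ P, (Y i).card := by
          calc P.card * t = ∑ _i ∈ P, t := by rw [Finset.sum_const, smul_eq_mul]
          _ ≤ _ := Finset.sum_le_sum hlb
        have hpq : P.card ≤ q := by
          rw [hqdef, Nat.le_div_iff_mul_le (show 0 < t by omega)]
          omega
        have hsplit : ∑ i ∈ Finset.univ \ P, (Y i).card + ∑ i ∈ P, (Y i).card
            = ∑ i, (Y i).card := Finset.sum_sdiff (Finset.subset_univ P)
        have hQcard : (Finset.univ \ P).card = r - P.card := by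
          rw [Finset.card_sdiff_of_subset (Finset.subset_univ P)]
          simp
        have h3 : ∑ i ∈ Finset.univ \ P, (Y i).card ≤ (r - P.card) * (t - 1) := by
          calc ∑ i ∈ Finset.univ \ P, (Y i).card ≤ ∑ _i ∈ Finset.univ \ P, (t - 1) := by
                refine Finset.sum_le_sum ?_
                intro i hi
                rw [Finset.mem_sdiff, hPdef] at hi
                have := hi.2
                simp only [Finset.mem_filter, Finset.mem_univ, true_and, not_le] at this
                omega
          _ = (Finset.univ \ P).card * (t - 1) := by rw [Finset.sum_const, smul_eq_mul]
          _ = (r - P.card) * (t - 1) := by rw [hQcard]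
        have e1 : P.card * t = P.card * (t - 1) + P.card * 1 := by
          rw [← Nat.mul_add]; congr 1; omega
        have e2 : (r - P.card) * (t - 1) + P.card * (t - 1) = r * (t - 1) := by
          rw [← Nat.add_mul]; congr 1; omega
        omega
    omega
  exact le_antisymm (Nat.sInf_le hmem) (le_csInf ⟨_, hmem⟩ hlow)
end

section
/- Let n ≥ rk, k,r ≥ 2, 0 ≤ s < k, n > a+s, and a ≥ r(k-s)-1. Then ecd^r(H(n,k,a,s), s) = n - a. -/
open Finset

lemma exists_equipartition_Icc (n a r : ℕ) (hr : 0 < r) (ha : a ≤ n) :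
    ∃ X : Fin r → Finset ℕ,
      (∀ i j, i ≠ j → Disjoint (X i) (X j)) ∧
      Finset.univ.biUnion X = Finset.Icc (n - a + 1) n ∧
      (∀ i j, (X i).card ≤ (X j).card + 1) := by
  refine ⟨fun i => (Finset.range ((a - i.val + r - 1) / r)).image
      (fun t => n - a + 1 + i.val + t * r), ?_, ?_, ?_⟩
  · intro i j hij
    simp only [Finset.disjoint_left, Finset.mem_image, Finset.mem_range]
    rintro y ⟨t, ht, rfl⟩ ⟨u, hu, he⟩
    have h1 : i.val + t * r = j.val + u * r := by omega
    have h2 : (i.val + t * r) % r = (j.val + u * r) % r := by rw [h1]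
    rw [Nat.add_mul_mod_self_right, Nat.add_mul_mod_self_right,
      Nat.mod_eq_of_lt i.isLt, Nat.mod_eq_of_lt j.isLt] at h2
    exact hij (Fin.ext h2)
  · ext x
    simp only [Finset.mem_biUnion, Finset.mem_univ, true_and, Finset.mem_image,
      Finset.mem_range, Finset.mem_Icc]
    constructor
    · rintro ⟨i, t, ht, rfl⟩
      have h1 : (t + 1) * r ≤ a - i.val + r - 1 := by
        rw [← Nat.le_div_iff_mul_le hr]; omega
      have h2 : (t + 1) * r = t * r + r := by ring
      have := i.isLt
      omega
    · intro hx
      have hja : x - (n - a + 1) < a := by omega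
      refine ⟨⟨(x - (n - a + 1)) % r, Nat.mod_lt _ hr⟩, (x - (n - a + 1)) / r, ?_, ?_⟩
      · have hmod := Nat.div_add_mod' (x - (n - a + 1)) r
        have hmlt : (x - (n - a + 1)) % r < r := Nat.mod_lt _ hr
        simp only [Fin.val_mk]
        rw [Nat.lt_iff_add_one_le, Nat.le_div_iff_mul_le hr, add_mul, one_mul]
        omega
      · have hmod := Nat.div_add_mod' (x - (n - a + 1)) r
        simp only [Fin.val_mk]
        omega
  · intro i j
    have h1 : ∀ m : Fin r, ((Finset.range ((a - m.val + r - 1) / r)).image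
        (fun t => n - a + 1 + m.val + t * r)).card = (a - m.val + r - 1) / r := by
      intro m
      rw [Finset.card_image_of_injective _ ?_, Finset.card_range]
      intro x y h
      simp only at h
      have : x * r = y * r := by omega
      exact Nat.eq_of_mul_eq_mul_right hr this
    rw [h1 i, h1 j]
    have h2 : a - i.val + r - 1 ≤ (a - j.val + r - 1) + r := by
      have := i.isLt; have := j.isLt; omega
    calc (a - i.val + r - 1) / r ≤ ((a - j.val + r - 1) + r) / r := Nat.div_le_div_right h2
      _ = (a - j.val + r - 1) / r + 1 := Nat.add_div_right _ hr

lemma stmt3_lower (n r k s a m : ℕ) (hk : 2 ≤ k) (hr : 2 ≤ r) (hn : r * k ≤ n)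
    (hs : s < k) (hna : a + s < n) (ha : r * (k - s) - 1 ≤ a)
    (X0 : Finset ℕ) (hX0 : X0 ⊆ Finset.Icc 1 n) (hm : X0.card = m)
    (X : Fin r → Finset ℕ) (hEq : EquitableParts (Finset.Icc 1 n \ X0) X)
    (hav : ∀ A ∈ Hfam n k a s, ∀ i, ¬ subS s A (X i)) : n - a ≤ m := by
  by_contra hcon
  push_neg at hcon
  obtain ⟨hdisj, hunion, hequi⟩ := hEq
  have hrpos : 0 < r := by omega
  have h2k : 2 * k ≤ n := le_trans (Nat.mul_le_mul_right k hr) hn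
  have hmn : m ≤ n := by
    have := Finset.card_le_card hX0
    rw [hm, Nat.card_Icc] at this; omega
  have hGX0 : (Finset.Icc 1 n \ X0).card = n - m := by
    rw [Finset.card_sdiff_of_subset hX0, Nat.card_Icc, hm]; omega
  have hsum : ∑ i, (X i).card = n - m := by
    rw [← Finset.card_biUnion (fun i _ j _ hij => hdisj i j hij), hunion, hGX0]
  have hrk : r * (k - s) ≤ a + 1 := by omega
  have hnm : a + 1 ≤ n - m := by omega
  -- every part has size ≥ k - s
  have hsize : ∀ j, k - s ≤ (X j).card := by
    intro j
    by_contra hc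
    push_neg at hc
    have h2 : (Finset.univ.erase j).card = r - 1 := by
      rw [Finset.card_erase_of_mem (Finset.mem_univ j), Finset.card_univ, Fintype.card_fin]
    have h1 : ∑ i ∈ Finset.univ.erase j, (X i).card ≤ (r - 1) * ((X j).card + 1) := by
      have := Finset.sum_le_card_nsmul (Finset.univ.erase j) (fun i => (X i).card)
        ((X j).card + 1) (fun i _ => hequi i j)
      simpa [h2, smul_eq_mul] using this
    have h3 := Finset.add_sum_erase Finset.univ (fun i => (X i).card) (Finset.mem_univ j)
    have h4 : (r - 1) * ((X j).card + 1) ≤ (r - 1) * (k - s) :=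
      Nat.mul_le_mul_left _ (by omega)
    have h5 : (r - 1) * (k - s) + (k - s) = r * (k - s) := by
      have h6 : k - s ≤ r * (k - s) := Nat.le_mul_of_pos_left _ hrpos
      rw [Nat.sub_one_mul]; omega
    omega
  -- an element outside A'
  have hAcard : (Finset.Icc (n - a + 1) n).card = a := by rw [Nat.card_Icc]; omega
  have hex : ∃ x ∈ Finset.Icc 1 n \ X0, x ∉ Finset.Icc (n - a + 1) n := by
    by_contra h
    push_neg at h
    have := Finset.card_le_card h
    omega
  obtain ⟨x, hxG, hxA⟩ := hex
  have hxB : x ∈ Finset.univ.biUnion X := by rw [hunion]; exact hxG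
  obtain ⟨j, -, hxj⟩ := Finset.mem_biUnion.mp hxB
  set U := Finset.Icc 1 (n - a) with hU
  set A' := Finset.Icc (n - a + 1) n with hA'
  have hXjG : X j ⊆ Finset.Icc 1 n := by
    intro y hy
    have h := Finset.subset_biUnion_of_mem X (Finset.mem_univ j) hy
    rw [hunion] at h
    exact (Finset.mem_sdiff.mp h).1
  have hxG1 : x ∈ Finset.Icc 1 n := (Finset.mem_sdiff.mp hxG).1
  have hxU : x ∈ U := by
    rw [hU, Finset.mem_Icc]
    rw [Finset.mem_Icc] at hxG1
    rw [hA', Finset.mem_Icc] at hxA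
    omega
  have hUcard : U.card = n - a := by rw [hU, Nat.card_Icc]; omega
  have hsd1 : X j \ U = X j ∩ A' := by
    ext y
    simp only [Finset.mem_sdiff, Finset.mem_inter, hU, hA', Finset.mem_Icc]
    constructor
    · rintro ⟨hy, h2⟩
      have h3 := hXjG hy; rw [Finset.mem_Icc] at h3
      exact ⟨hy, by omega⟩
    · rintro ⟨hy, h2⟩
      exact ⟨hy, by omega⟩
  have hsplitX : (X j ∩ U).card + (X j ∩ A').card = (X j).card := by
    rw [← hsd1]; exact Finset.card_inter_add_card_sdiff _ _
  have hsplitU : (X j ∩ U).card + (U \ X j).card = n - a := by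
    rw [← hUcard, ← Finset.card_inter_add_card_sdiff U (X j), Finset.inter_comm]
  have hsplitA : (X j ∩ A').card + (A' \ X j).card = a := by
    rw [← hAcard, ← Finset.card_inter_add_card_sdiff A' (X j), Finset.inter_comm]
  set q := min s (U \ X j).card with hq
  obtain ⟨Q, hQsub, hQcard⟩ := Finset.exists_subset_card_eq (s := (U \ X j)) (n := q) (min_le_right _ _)
  have hxXU : x ∈ X j ∩ U := Finset.mem_inter.mpr ⟨hxj, hxU⟩
  have hXU1 : 1 ≤ (X j ∩ U).card := Finset.card_pos.mpr ⟨x, hxXU⟩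
  set p := min (X j ∩ U).card (k - q) with hp
  obtain ⟨P, hPsub, hPcard⟩ := Finset.exists_subset_card_eq (s := (X j ∩ U)) (n := p) (min_le_left _ _)
  set r1 := min (k - p - q) (X j ∩ A').card with hr1
  obtain ⟨R1, hR1sub, hR1card⟩ := Finset.exists_subset_card_eq (s := (X j ∩ A')) (n := r1) (min_le_right _ _)
  set r2 := k - p - q - r1 with hr2
  have hkXj : k - s ≤ (X j).card := hsize j
  have hr2le : r2 ≤ (A' \ X j).card := by omega
  have hqr2 : q + r2 ≤ s := by omega
  have hpq : s + 1 ≤ p + q := by omega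
  have hpqk : p + q + (r1 + r2) = k := by omega
  obtain ⟨R2, hR2sub, hR2card⟩ := Finset.exists_subset_card_eq (s := (A' \ X j)) (n := r2) hr2le
  -- basic membership facts
  have hUA : ∀ y, y ∈ U → y ∉ A' := by
    intro y hy1 hy2
    rw [hU, Finset.mem_Icc] at hy1
    rw [hA', Finset.mem_Icc] at hy2
    omega
  have hPU : P ⊆ U := hPsub.trans Finset.inter_subset_right
  have hPX : P ⊆ X j := hPsub.trans Finset.inter_subset_left
  have hQU : Q ⊆ U := hQsub.trans (Finset.sdiff_subset)
  have hQX : ∀ y ∈ Q, y ∉ X j := fun y hy => (Finset.mem_sdiff.mp (hQsub hy)).2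
  have hR1A : R1 ⊆ A' := hR1sub.trans Finset.inter_subset_right
  have hR1X : R1 ⊆ X j := hR1sub.trans Finset.inter_subset_left
  have hR2A : R2 ⊆ A' := hR2sub.trans (Finset.sdiff_subset)
  have hR2X : ∀ y ∈ R2, y ∉ X j := fun y hy => (Finset.mem_sdiff.mp (hR2sub hy)).2
  set F := (P ∪ Q) ∪ (R1 ∪ R2) with hF
  have hdPQ : Disjoint P Q :=
    Finset.disjoint_left.mpr fun y hyP hyQ => hQX y hyQ (hPX hyP)
  have hdR : Disjoint R1 R2 :=
    Finset.disjoint_left.mpr fun y hyR1 hyR2 => hR2X y hyR2 (hR1X hyR1)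
  have hdBig : Disjoint (P ∪ Q) (R1 ∪ R2) := by
    rw [Finset.disjoint_left]
    intro y hy1 hy2
    have hyU : y ∈ U := by
      rcases Finset.mem_union.mp hy1 with h | h
      exacts [hPU h, hQU h]
    have hyA : y ∈ A' := by
      rcases Finset.mem_union.mp hy2 with h | h
      exacts [hR1A h, hR2A h]
    exact hUA y hyU hyA
  have hFcard : F.card = k := by
    rw [hF, Finset.card_union_of_disjoint hdBig, Finset.card_union_of_disjoint hdPQ,
      Finset.card_union_of_disjoint hdR, hPcard, hQcard, hR1card, hR2card]
    exact hpqk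
  have hUsubG : U ⊆ Finset.Icc 1 n := Finset.Icc_subset_Icc le_rfl (by omega)
  have hAsubG : A' ⊆ Finset.Icc 1 n := Finset.Icc_subset_Icc (by omega) le_rfl
  have hFsubG : F ⊆ Finset.Icc 1 n := by
    rw [hF]
    refine Finset.union_subset (Finset.union_subset ?_ ?_) (Finset.union_subset ?_ ?_)
    exacts [hPU.trans hUsubG, hQU.trans hUsubG, hR1A.trans hAsubG, hR2A.trans hAsubG]
  have hFnot : ¬ subS s F A' := by
    rintro ⟨E, hEc, hFE⟩
    have hPQE : P ∪ Q ⊆ E := by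
      intro y hy
      by_contra hyE
      have hyF : y ∈ F := Finset.mem_union_left _ hy
      have hyA : y ∈ A' := hFE (Finset.mem_sdiff.mpr ⟨hyF, hyE⟩)
      have hyU : y ∈ U := by
        rcases Finset.mem_union.mp hy with h | h
        exacts [hPU h, hQU h]
      exact hUA y hyU hyA
    have h := Finset.card_le_card hPQE
    rw [Finset.card_union_of_disjoint hdPQ, hPcard, hQcard] at h
    omega
  have hFmem : F ∈ Hfam n k a s := ⟨hFsubG, hFcard, hFnot⟩
  have hFsubS : subS s F (X j) := by
    refine ⟨Q ∪ R2, ?_, ?_⟩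
    · calc (Q ∪ R2).card ≤ Q.card + R2.card := Finset.card_union_le _ _
        _ ≤ s := by omega
    · intro y hy
      rw [Finset.mem_sdiff] at hy
      obtain ⟨hyF, hyE⟩ := hy
      rcases Finset.mem_union.mp hyF with h | h
      · rcases Finset.mem_union.mp h with h' | h'
        · exact hPX h'
        · exact absurd (Finset.mem_union_left _ h') hyE
      · rcases Finset.mem_union.mp h with h' | h'
        · exact hR1X h'
        · exact absurd (Finset.mem_union_right _ h') hyE
  exact hav F hFmem j hFsubS

theorem stmt3 (n r k s a : ℕ) (hk : 2 ≤ k) (hr : 2 ≤ r) (hn : r * k ≤ n)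
    (hs : s < k) (hna : a + s < n) (ha : r * (k - s) - 1 ≤ a) :
    ecd (Finset.Icc 1 n) r s (Hfam n k a s) = n - a := by
  have hrpos : 0 < r := by omega
  have hmem : (n - a) ∈ {m | ∃ X0 ⊆ Finset.Icc 1 n, X0.card = m ∧ ∃ X : Fin r → Finset ℕ,
      EquitableParts (Finset.Icc 1 n \ X0) X ∧ ∀ A ∈ Hfam n k a s, ∀ i, ¬ subS s A (X i)} := by
    obtain ⟨X, hdisj, hunion, hequi⟩ := exists_equipartition_Icc n a r hrpos (by omega)
    have hset : Finset.Icc 1 n \ Finset.Icc 1 (n - a) = Finset.Icc (n - a + 1) n := by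
      ext y; simp only [Finset.mem_sdiff, Finset.mem_Icc]; omega
    refine ⟨Finset.Icc 1 (n - a), Finset.Icc_subset_Icc le_rfl (by omega),
      by rw [Nat.card_Icc]; omega, X, ⟨hdisj, by rw [hset, hunion], hequi⟩, ?_⟩
    intro B hB i hsubS
    obtain ⟨E, hEc, hBE⟩ := hsubS
    have hXi : X i ⊆ Finset.Icc (n - a + 1) n := by
      rw [← hunion]; exact Finset.subset_biUnion_of_mem X (Finset.mem_univ i)
    exact hB.2.2 ⟨E, hEc, hBE.trans hXi⟩
  unfold ecd
  refine le_antisymm (Nat.sInf_le hmem) ?_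
  obtain ⟨X0, hX0, hcard, X, hEq, hav⟩ := Nat.sInf_mem (Set.nonempty_of_mem hmem)
  exact stmt3_lower n r k s a _ hk hr hn hs hna ha X0 hX0 hcard X hEq hav
end

section
/- Let n ≥ r(k-1)+1, 0 ≤ s < k, and let P = {P_1,...,P_l} be a partition of [n] with |P_i| ≤ r for all i. Then the pair (all k-subsets of [n], P) is s-good: for any P-admissible subset A of [n] (i.e., |A ∩ P_i| ≤ 1 for all i) such that some k-subset F satisfies F ⊆_s A, there exists a P-admissible k-subset F' with F' ⊆_s A. -/
open Finset

section Aux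

lemma adm_extend (n r k : ℕ) (P : Finset (Finset ℕ)) (hn : r * (k - 1) + 1 ≤ n)
    (hP : IsPartition n P) (hPr : ∀ p ∈ P, p.card ≤ r)
    (B : Finset ℕ) (hBn : B ⊆ Finset.Icc 1 n) (hBadm : Adm P B) (hBk : B.card < k) :
    ∃ x ∈ Finset.Icc 1 n, x ∉ B ∧ Adm P (insert x B) := by
  classical
  obtain ⟨hdisj, hsup⟩ := hP
  set S : Finset (Finset ℕ) := P.filter (fun p => (B ∩ p).Nonempty) with hS
  have hScard : S.card ≤ B.card := by
    have hsub : S ⊆ B.biUnion (fun b => P.filter (fun p => b ∈ p)) := by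
      intro p hp
      rw [hS, mem_filter] at hp
      obtain ⟨b, hb⟩ := hp.2
      rw [mem_inter] at hb
      exact mem_biUnion.mpr ⟨b, hb.1, mem_filter.mpr ⟨hp.1, hb.2⟩⟩
    calc S.card ≤ (B.biUnion (fun b => P.filter (fun p => b ∈ p))).card :=
          card_le_card hsub
      _ ≤ ∑ b ∈ B, (P.filter (fun p => b ∈ p)).card := card_biUnion_le
      _ ≤ ∑ _b ∈ B, 1 := by
          apply Finset.sum_le_sum
          intro b _
          apply Finset.card_le_one.mpr
          intro p hp q hq
          rw [mem_filter] at hp hq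
          by_contra hne
          exact (Finset.disjoint_left.mp (hdisj p hp.1 q hq.1 hne)) hp.2 hq.2
      _ = B.card := by simp
  set C : Finset ℕ := S.sup id with hC
  have hCcard : C.card < n := by
    have h1 : C.card ≤ ∑ p ∈ S, p.card := by
      rw [hC, sup_eq_biUnion]
      exact card_biUnion_le
    have h2 : ∑ p ∈ S, p.card ≤ S.card * r := by
      apply Finset.sum_le_card_nsmul
      intro p hp
      exact hPr p (mem_filter.mp hp).1
    have h3 : S.card * r ≤ (k-1) * r := by
      apply Nat.mul_le_mul_right
      omega
    have : (k-1) * r < n := by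
      rw [Nat.mul_comm]; omega
    omega
  have hx : ∃ x ∈ Finset.Icc 1 n, x ∉ C := by
    apply Finset.not_subset.mp
    intro hsub
    have := Finset.card_le_card hsub
    rw [Nat.card_Icc] at this
    omega
  obtain ⟨x, hxn, hxC⟩ := hx
  refine ⟨x, hxn, ?_, ?_⟩
  · intro hxB
    rw [← hsup] at hxn
    obtain ⟨q, hq, hxq⟩ := Finset.mem_sup.mp hxn
    have : q ∈ S := mem_filter.mpr ⟨hq, ⟨x, mem_inter.mpr ⟨hxB, hxq⟩⟩⟩
    exact hxC (Finset.le_sup (f := id) this hxq)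
  · intro p hp
    by_cases hxp : x ∈ p
    · have hpS : p ∉ S := fun hpS => hxC (Finset.le_sup (f := id) hpS hxp)
      have hBp : B ∩ p = ∅ := by
        by_contra h
        exact hpS (mem_filter.mpr ⟨hp, Finset.nonempty_iff_ne_empty.mpr h⟩)
      have : insert x B ∩ p ⊆ {x} := by
        intro y hy
        rw [mem_inter, mem_insert] at hy
        rcases hy.1 with h | h
        · exact mem_singleton.mpr h
        · exact absurd (mem_inter.mpr ⟨h, hy.2⟩) (by rw [hBp]; exact notMem_empty y)
      calc (insert x B ∩ p).card ≤ ({x} : Finset ℕ).card := card_le_card this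
        _ = 1 := card_singleton x
    · have : insert x B ∩ p = B ∩ p := by
        ext y
        simp only [mem_inter, mem_insert]
        constructor
        · rintro ⟨h | h, h2⟩
          · exact absurd (h ▸ h2) hxp
          · exact ⟨h, h2⟩
        · rintro ⟨h, h2⟩; exact ⟨Or.inr h, h2⟩
      rw [this]
      exact hBadm p hp

lemma adm_grow (n r k : ℕ) (P : Finset (Finset ℕ)) (hn : r * (k - 1) + 1 ≤ n)
    (hP : IsPartition n P) (hPr : ∀ p ∈ P, p.card ≤ r) :
    ∀ m, ∀ B : Finset ℕ, B ⊆ Finset.Icc 1 n → Adm P B → B.card + m = k →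
      ∃ F', B ⊆ F' ∧ F' ⊆ Finset.Icc 1 n ∧ Adm P F' ∧ F'.card = k := by
  intro m
  induction m with
  | zero => intro B h1 h2 h3; exact ⟨B, subset_rfl, h1, h2, by omega⟩
  | succ m ih =>
    intro B h1 h2 h3
    obtain ⟨x, hxn, hxB, hadm⟩ := adm_extend n r k P hn hP hPr B h1 h2 (by omega)
    obtain ⟨F', hBF, hF1, hF2, hF3⟩ := ih (insert x B) (insert_subset hxn h1) hadm
      (by rw [card_insert_of_notMem hxB]; omega)
    exact ⟨F', (subset_insert x B).trans hBF, hF1, hF2, hF3⟩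

end Aux


theorem stmt7 (n r k s : ℕ) (P : Finset (Finset ℕ)) (hn : r * (k - 1) + 1 ≤ n)
    (hs : s < k) (hP : IsPartition n P) (hPr : ∀ p ∈ P, p.card ≤ r) :
    ∀ A ⊆ Finset.Icc 1 n, Adm P A →
      (∃ F ∈ kSubsets n k, subS s F A) →
      ∃ F' ∈ kSubsets n k, Adm P F' ∧ subS s F' A := by
  intro A hA hAadm ⟨F, ⟨hFn, hFk⟩, E, hE, hFE⟩
  classical
  set B := F ∩ A with hB
  have hBA : B ⊆ A := inter_subset_right
  have hBn : B ⊆ Finset.Icc 1 n := hBA.trans hA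
  have hBadm : Adm P B := fun p hp =>
    le_trans (card_le_card (inter_subset_inter hBA subset_rfl)) (hAadm p hp)
  have hFA : F \ A ⊆ E := by
    intro y hy
    rw [mem_sdiff] at hy
    by_contra hyE
    exact hy.2 (hFE (mem_sdiff.mpr ⟨hy.1, hyE⟩))
  have hFAcard : (F \ A).card ≤ s := le_trans (card_le_card hFA) hE
  have hBcard : k ≤ B.card + s := by
    have h4 : (F ∩ A).card + (F \ A).card = F.card := card_inter_add_card_sdiff F A
    rw [hB]
    omega
  have hBk : B.card ≤ k := hFk ▸ card_le_card inter_subset_left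
  obtain ⟨F', hBF', hF'n, hF'adm, hF'k⟩ :=
    adm_grow n r k P hn hP hPr (k - B.card) B hBn hBadm (by omega)
  refine ⟨F', ⟨hF'n, hF'k⟩, hF'adm, F' \ B, ?_, ?_⟩
  · rw [card_sdiff_of_subset hBF', hF'k]; omega
  · intro y hy
    rw [mem_sdiff, mem_sdiff] at hy
    push_neg at hy
    exact hBA (hy.2 hy.1)
end

section
/- Let n ≥ rk, 1 ≤ s < k, and let P = {P_1,...,P_l} be a partition of [n] with |P_i| ≤ r, such that at least s+1 nonempty parts of P are disjoint from A = {n-a+1,...,n}. Then the pair (H(n,k,a,s), P) is ⌊s/2⌋-good: whenever B is P-admissible and there exists F ∈ H(n,k,a,s) with F ⊆_{⌊s/2⌋} B, there exists a P-admissible F' ∈ H(n,k,a,s) with F' ⊆_{⌊s/2⌋} B. -/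
open Finset

theorem stmt9 (n r k s a : ℕ) (P : Finset (Finset ℕ)) (hn : r * k ≤ n)
    (hs1 : 1 ≤ s) (hs : s < k) (hkn : k < n) (hak : a < k)
    (hP : IsPartition n P) (hPr : ∀ p ∈ P, p.card ≤ r)
    (hQ : ∃ Q ⊆ P, Q.card = s + 1 ∧
      ∀ p ∈ Q, p.Nonempty ∧ Disjoint p (Finset.Icc (n - a + 1) n)) :
    ∀ B ⊆ Finset.Icc 1 n, Adm P B →
      (∃ F ∈ Hfam n k a s, subS (s / 2) F B) →
      ∃ F' ∈ Hfam n k a s, Adm P F' ∧ subS (s / 2) F' B := by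
  classical
  obtain ⟨Q, hQP, hQcard, hQprop⟩ := hQ
  intro B hB hAdmB hex
  obtain ⟨F, hFmem, E, hEcard, hFE⟩ := hex
  simp only [Hfam, Set.mem_setOf_eq] at hFmem
  obtain ⟨hFIcc, hFk, hFA⟩ := hFmem
  set m := s / 2 with hm_def
  set A := Finset.Icc (n - a + 1) n with hA_def
  have hm : m ≤ s := Nat.div_le_self s 2
  -- F \ B ⊆ E, so few elements of F are outside B
  have hFnB : (F \ B).card ≤ m := by
    refine le_trans (card_le_card ?_) hEcard
    intro x hx
    rcases mem_sdiff.1 hx with ⟨hxF, hxB⟩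
    by_contra hxE
    exact hxB (hFE (mem_sdiff.2 ⟨hxF, hxE⟩))
  have hFBcard : k - m ≤ (F ∩ B).card := by
    have h1 := Finset.le_card_sdiff (F \ B) F
    rw [sdiff_sdiff_self_left F B] at h1
    omega
  have hFAcard : s + 1 ≤ (F \ A).card := by
    by_contra h
    push_neg at h
    refine hFA ⟨F \ A, by omega, ?_⟩
    rw [sdiff_sdiff_self_left]
    exact inter_subset_right
  have hW : s + 1 - m ≤ ((F ∩ B) \ A).card := by
    have hsub : F \ A ⊆ ((F ∩ B) \ A) ∪ (F \ B) := by
      intro x hx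
      rcases mem_sdiff.1 hx with ⟨hxF, hxA⟩
      by_cases hxB : x ∈ B
      · exact mem_union_left _ (mem_sdiff.2 ⟨mem_inter.2 ⟨hxF, hxB⟩, hxA⟩)
      · exact mem_union_right _ (mem_sdiff.2 ⟨hxF, hxB⟩)
    have h2 := (card_le_card hsub).trans (card_union_le _ _)
    omega
  obtain ⟨W', hW'sub, hW'card⟩ := exists_subset_card_eq hW
  have hW'FB : W' ⊆ F ∩ B := hW'sub.trans sdiff_subset
  obtain ⟨S, hW'S, hSFB, hScard⟩ :=
    exists_subsuperset_card_eq hW'FB (by rw [hW'card]; omega) hFBcard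
  have hSB : S ⊆ B := hSFB.trans inter_subset_right
  have hSIcc : S ⊆ Finset.Icc 1 n := hSB.trans hB
  have hSA1 : s + 1 - m ≤ (S \ A).card := by
    rw [← hW'card]
    apply card_le_card
    intro x hx
    exact mem_sdiff.2 ⟨hW'S hx, (mem_sdiff.1 (hW'sub hx)).2⟩
  -- choice functions
  set c : Finset ℕ → ℕ := fun p => if h : p.Nonempty then h.choose else 0 with hc_def
  have hc : ∀ p : Finset ℕ, p.Nonempty → c p ∈ p := by
    intro p h
    simp only [hc_def, dif_pos h]
    exact h.choose_spec
  set g : Finset ℕ → ℕ := fun p => if h : (p ∩ S).Nonempty then h.choose else 0 with hg_def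
  have hg : ∀ p : Finset ℕ, ¬ Disjoint p S → g p ∈ p ∩ S := by
    intro p h
    have h' := not_disjoint_iff_nonempty_inter.1 h
    simp only [hg_def, dif_pos h']
    exact h'.choose_spec
  set Pne := P.filter (fun p => p.Nonempty) with hPne_def
  have hkPne : k ≤ Pne.card := by
    have hsum : ∑ p ∈ P, p.card = n := by
      have h1 : (P.biUnion id).card = ∑ p ∈ P, (id p).card :=
        card_biUnion (fun x hx y hy hxy => hP.1 x hx y hy hxy)
      rw [← sup_eq_biUnion, hP.2, Nat.card_Icc] at h1
      simp only [id_eq] at h1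
      omega
    have hsum2 : ∑ p ∈ Pne, p.card = n := by
      rw [← hsum]
      apply sum_subset (filter_subset _ _)
      intro p hp hpn
      simp only [hPne_def, mem_filter, hp, true_and] at hpn
      rw [not_nonempty_iff_eq_empty.1 hpn]
      rfl
    have hle : n ≤ Pne.card * r := by
      rw [← hsum2]
      calc ∑ p ∈ Pne, p.card ≤ ∑ _p ∈ Pne, r :=
            sum_le_sum (fun p hp => hPr p (filter_subset _ _ hp))
        _ = Pne.card * r := by rw [sum_const, smul_eq_mul]
    have hr1 : 1 ≤ r := by
      have hQne : Q.Nonempty := card_pos.1 (by omega)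
      obtain ⟨p0, hp0⟩ := hQne
      exact le_trans (card_pos.2 (hQprop p0 hp0).1) (hPr p0 (hQP hp0))
    have h2 : r * k ≤ r * Pne.card := le_trans hn (by rw [mul_comm]; exact hle)
    exact Nat.le_of_mul_le_mul_left h2 hr1
  set M := P.filter (fun p => ¬ Disjoint p S) with hM_def
  have hMcard : M.card ≤ S.card := by
    apply card_le_card_of_injOn g
    · intro p hp
      exact (mem_inter.1 (hg p (mem_filter.1 hp).2)).2
    · intro p hp p' hp' hgg
      simp only [mem_coe] at hp hp'
      by_contra hne
      have hd := hP.1 p (filter_subset _ _ hp) p' (filter_subset _ _ hp') hne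
      have h1 : g p ∈ p := (mem_inter.1 (hg p (mem_filter.1 hp).2)).1
      have h2 : g p ∈ p' := by
        rw [hgg]
        exact (mem_inter.1 (hg p' (mem_filter.1 hp').2)).1
      exact disjoint_left.1 hd h1 h2
  set N := Pne.filter (fun p => Disjoint p S) with hN_def
  have hNcard : m ≤ N.card := by
    have hsub : Pne ⊆ N ∪ M := by
      intro p hp
      by_cases hd : Disjoint p S
      · exact mem_union_left _ (mem_filter.2 ⟨hp, hd⟩)
      · exact mem_union_right _ (mem_filter.2 ⟨filter_subset _ _ hp, hd⟩)
    have h3 := (card_le_card hsub).trans (card_union_le _ _)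
    omega
  set Q' := Q.filter (fun p => Disjoint p S) with hQ'_def
  have hQ'N : Q' ⊆ N := by
    intro p hp
    rcases mem_filter.1 hp with ⟨hpQ, hd⟩
    exact mem_filter.2 ⟨mem_filter.2 ⟨hQP hpQ, (hQprop p hpQ).1⟩, hd⟩
  have hq_le : Q'.card ≤ s + 1 := by
    rw [← hQcard]
    exact card_le_card (filter_subset _ _)
  obtain ⟨Q'', hQ''sub, hQ''card⟩ :=
    exists_subset_card_eq (min_le_right m Q'.card)
  obtain ⟨R, hQ''R, hRN, hRcard⟩ :=
    exists_subsuperset_card_eq (hQ''sub.trans hQ'N)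
      (by rw [hQ''card]; exact min_le_left _ _) hNcard
  have hRP : R ⊆ P := fun p hp => filter_subset _ _ (filter_subset _ _ (hRN hp))
  have hRne : ∀ p ∈ R, p.Nonempty := fun p hp =>
    (mem_filter.1 (filter_subset _ _ (hRN hp))).2
  have hRS : ∀ p ∈ R, Disjoint p S := fun p hp => (mem_filter.1 (hRN hp)).2
  have hcmem : ∀ p ∈ R, c p ∈ p := fun p hp => hc p (hRne p hp)
  have hinjR : Set.InjOn c ↑R := by
    intro p hp p' hp' hcc
    simp only [mem_coe] at hp hp'
    by_contra hne
    have hd := hP.1 p (hRP hp) p' (hRP hp') hne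
    have h1 : c p ∈ p' := by rw [hcc]; exact hcmem p' hp'
    exact disjoint_left.1 hd (hcmem p hp) h1
  set T := R.image c with hT_def
  have hTcard : T.card = m := by
    rw [hT_def, card_image_of_injOn hinjR, hRcard]
  have hTS : Disjoint T S := by
    rw [disjoint_left]
    intro x hx hxS
    obtain ⟨p, hp, rfl⟩ := mem_image.1 hx
    exact disjoint_left.1 (hRS p hp) (hcmem p hp) hxS
  have hTIcc : T ⊆ Finset.Icc 1 n := by
    intro x hx
    obtain ⟨p, hp, rfl⟩ := mem_image.1 hx
    have hsup : p ⊆ P.sup id := le_sup (f := id) (hRP hp)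
    rw [hP.2] at hsup
    exact hsup (hcmem p hp)
  have hTA : min m Q'.card ≤ (T \ A).card := by
    have hsub : Q''.image c ⊆ T \ A := by
      intro x hx
      obtain ⟨p, hp, rfl⟩ := mem_image.1 hx
      have hpR : p ∈ R := hQ''R hp
      have hpQ : p ∈ Q := filter_subset _ _ (hQ''sub hp)
      refine mem_sdiff.2 ⟨mem_image_of_mem c hpR, ?_⟩
      exact disjoint_left.1 (hQprop p hpQ).2 (hcmem p hpR)
    have himg : (Q''.image c).card = Q''.card :=
      card_image_of_injOn (hinjR.mono (coe_subset.mpr hQ''R))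
    rw [← hQ''card, ← himg]
    exact card_le_card hsub
  have hgmem : ∀ p ∈ Q \ Q', g p ∈ p ∩ S := by
    intro p hp
    rcases mem_sdiff.1 hp with ⟨hpQ, hpQ'⟩
    refine hg p (fun hd => hpQ' ?_)
    exact mem_filter.2 ⟨hpQ, hd⟩
  have hSA2 : s + 1 - Q'.card ≤ (S \ A).card := by
    have h1 : (Q \ Q').card = s + 1 - Q'.card := by
      rw [card_sdiff_of_subset (filter_subset _ _), hQcard]
    rw [← h1]
    apply card_le_card_of_injOn g
    · intro p hp
      have hpQ : p ∈ Q := (mem_sdiff.1 hp).1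
      refine mem_sdiff.2 ⟨(mem_inter.1 (hgmem p hp)).2, ?_⟩
      exact disjoint_left.1 (hQprop p hpQ).2 (mem_inter.1 (hgmem p hp)).1
    · intro p hp p' hp' hgg
      simp only [mem_coe] at hp hp'
      by_contra hne
      have hd := hP.1 p (hQP (mem_sdiff.1 hp).1) p' (hQP (mem_sdiff.1 hp').1) hne
      have h2 : g p ∈ p' := by rw [hgg]; exact (mem_inter.1 (hgmem p' hp')).1
      exact disjoint_left.1 hd (mem_inter.1 (hgmem p hp)).1 h2
  set F' := S ∪ T with hF'_def
  have hF'card : F'.card = k := by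
    rw [hF'_def, card_union_of_disjoint hTS.symm, hScard, hTcard]
    omega
  have hF'Icc : F' ⊆ Finset.Icc 1 n := union_subset hSIcc hTIcc
  have hF'A : s + 1 ≤ (F' \ A).card := by
    have hsub : (S \ A) ∪ (T \ A) ⊆ F' \ A := by
      intro x hx
      rcases mem_union.1 hx with h | h
      · exact mem_sdiff.2 ⟨mem_union_left _ (mem_sdiff.1 h).1, (mem_sdiff.1 h).2⟩
      · exact mem_sdiff.2 ⟨mem_union_right _ (mem_sdiff.1 h).1, (mem_sdiff.1 h).2⟩
    have hdisj : Disjoint (S \ A) (T \ A) :=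
      disjoint_of_subset_left sdiff_subset (disjoint_of_subset_right sdiff_subset hTS.symm)
    have h4 := card_le_card hsub
    rw [card_union_of_disjoint hdisj] at h4
    rcases le_total m Q'.card with h | h
    · rw [min_eq_left h] at hTA; omega
    · rw [min_eq_right h] at hTA; omega
  refine ⟨F', ⟨hF'Icc, hF'card, ?_⟩, ?_, ⟨T, le_of_eq hTcard, ?_⟩⟩
  · rintro ⟨E', hE'card, hE'sub⟩
    have hsub : F' \ A ⊆ E' := by
      intro x hx
      rcases mem_sdiff.1 hx with ⟨hx1, hx2⟩
      by_contra hxE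
      exact hx2 (hE'sub (mem_sdiff.2 ⟨hx1, hxE⟩))
    have := card_le_card hsub
    omega
  · intro p hp
    by_cases hpR : p ∈ R
    · have hSp : S ∩ p = ∅ := by
        rw [← disjoint_iff_inter_eq_empty]
        exact (hRS p hpR).symm
      have hTp : T ∩ p ⊆ {c p} := by
        intro x hx
        rcases mem_inter.1 hx with ⟨hxT, hxp⟩
        obtain ⟨p', hp', rfl⟩ := mem_image.1 hxT
        have hpp : p' = p := by
          by_contra hne
          exact disjoint_left.1 (hP.1 p' (hRP hp') p hp hne) (hcmem p' hp') hxp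
        rw [hpp]
        exact mem_singleton_self _
      calc (F' ∩ p).card ≤ ((S ∩ p) ∪ (T ∩ p)).card := by
            apply card_le_card
            rw [hF'_def, union_inter_distrib_right]
        _ ≤ ({c p} : Finset ℕ).card := by
            apply card_le_card
            rw [hSp, empty_union]
            exact hTp
        _ = 1 := card_singleton _
    · have hTp : T ∩ p = ∅ := by
        rw [eq_empty_iff_forall_notMem]
        intro x hx
        rcases mem_inter.1 hx with ⟨hxT, hxp⟩
        obtain ⟨p', hp', rfl⟩ := mem_image.1 hxT
        have hne : p' ≠ p := fun h => hpR (h ▸ hp')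
        exact disjoint_left.1 (hP.1 p' (hRP hp') p hp hne) (hcmem p' hp') hxp
      calc (F' ∩ p).card ≤ ((S ∩ p) ∪ (T ∩ p)).card := by
            apply card_le_card
            rw [hF'_def, union_inter_distrib_right]
        _ = (S ∩ p).card := by rw [hTp, union_empty]
        _ ≤ (B ∩ p).card := card_le_card (inter_subset_inter hSB (Finset.Subset.refl _))
        _ ≤ 1 := hAdmB p hp
  · intro x hx
    rcases mem_sdiff.1 hx with ⟨hx1, hx2⟩
    rw [hF'_def] at hx1
    rcases mem_union.1 hx1 with h | h
    · exact hSB h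
    · exact absurd h hx2
end

section
/- Let n ≥ rk, r, k ≥ 2, 0 ≤ s < k, 0 ≤ a ≤ r(k-s-1), and A = {n-a+1,...,n}. There exists a partition P = {P_1,...,P_l} of [n] with |P_i| = r for 1 ≤ i ≤ k-s-1, |P_i| ≤ r for all i, and A ⊆ P_1 ∪ ... ∪ P_{k-s-1}; and for any such partition, every P-admissible k-subset F of [n] satisfies F ⊄_s A (i.e., F contains at most k-s-1 elements of A), so F ∈ H(n,k,a,s). -/
open Finset

theorem stmt19 (n r k s a : ℕ) (hn : r * k ≤ n) (hr : 2 ≤ r) (hk : 2 ≤ k)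
    (hs : s < k) (ha : a ≤ r * (k - s - 1)) :
    (∃ P : Finset (Finset ℕ), IsPartition n P ∧ (∀ p ∈ P, p.card ≤ r) ∧
      ∃ Q ⊆ P, Q.card = k - s - 1 ∧ (∀ p ∈ Q, p.card = r) ∧
        Finset.Icc (n - a + 1) n ⊆ Q.sup id) ∧
    (∀ P : Finset (Finset ℕ), IsPartition n P → (∀ p ∈ P, p.card ≤ r) →
      ∀ Q ⊆ P, Q.card = k - s - 1 → (∀ p ∈ Q, p.card = r) →
        Finset.Icc (n - a + 1) n ⊆ Q.sup id →
        ∀ F ⊆ Finset.Icc 1 n, F.card = k → Adm P F →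
          (F ∩ Finset.Icc (n - a + 1) n).card ≤ k - s - 1 ∧
          ¬ subS s F (Finset.Icc (n - a + 1) n) ∧ F ∈ Hfam n k a s) := by
  
  constructor
  · -- Existence of the partition
    set t := k - s - 1 with ht
    have htk : t ≤ k := by omega
    have hrt : r * t ≤ n := le_trans (Nat.mul_le_mul_left r htk) hn
    set m := n - r * t with hm
    have hmn : m + r * t = n := by omega
    set B : ℕ → Finset ℕ := fun i => Finset.Icc (m + r*i + 1) (m + r*(i+1)) with hB
    have hBcard : ∀ i, (B i).card = r := by
      intro i
      have h1 : r * (i+1) = r * i + r := by ring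
      simp only [hB, Nat.card_Icc, h1]
      generalize r * i = j
      omega
    have hBmem : ∀ i y, y ∈ B i ↔ m + r*i + 1 ≤ y ∧ y ≤ m + r*(i+1) := by
      intro i y; simp [hB]
    have hBunion : ∀ y, (∃ i, i < t ∧ y ∈ B i) ↔ (m+1 ≤ y ∧ y ≤ m + r*t) := by
      intro y
      constructor
      · rintro ⟨i, hi, hy⟩
        rw [hBmem] at hy
        have h1 : r * (i+1) ≤ r * t := Nat.mul_le_mul_left r (by omega)
        have h2 : 0 ≤ r * i := Nat.zero_le _
        omega
      · rintro ⟨h1, h2⟩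
        set d := y - m - 1 with hd
        refine ⟨d / r, ?_, ?_⟩
        · have : r * (d / r) ≤ d := Nat.mul_div_le d r
          have hdt : d < r * t := by omega
          have : r * (d / r) < r * t := by omega
          exact Nat.lt_of_mul_lt_mul_left this
        · rw [hBmem]
          have e1 : r * (d / r) + d % r = d := Nat.div_add_mod d r
          have e2 : d % r < r := Nat.mod_lt _ (by omega)
          have e3 : r * (d / r + 1) = r * (d / r) + r := by ring
          rw [e3]
          generalize r * (d / r) = j at e1 ⊢
          omega
    set Q : Finset (Finset ℕ) := (Finset.range t).image B with hQ
    set S : Finset (Finset ℕ) := (Finset.Icc 1 m).image (fun x => ({x} : Finset ℕ)) with hS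
    set P := S ∪ Q with hP
    have hmemP : ∀ p, p ∈ P ↔ (∃ x, x ∈ Finset.Icc 1 m ∧ p = {x}) ∨ (∃ i, i < t ∧ p = B i) := by
      intro p
      simp only [hP, hS, hQ, Finset.mem_union, Finset.mem_image, Finset.mem_range]
      constructor
      · rintro (⟨x, hx, rfl⟩ | ⟨i, hi, rfl⟩)
        · exact Or.inl ⟨x, hx, rfl⟩
        · exact Or.inr ⟨i, hi, rfl⟩
      · rintro (⟨x, hx, rfl⟩ | ⟨i, hi, rfl⟩)
        · exact Or.inl ⟨x, hx, rfl⟩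
        · exact Or.inr ⟨i, hi, rfl⟩
    have hBdisj : ∀ i j, i ≠ j → Disjoint (B i) (B j) := by
      intro i j hij
      rcases Nat.lt_or_ge i j with h | h
      · apply Finset.disjoint_left.mpr
        intro x hx hx'
        rw [hBmem] at hx hx'
        have : r * (i+1) ≤ r * j := Nat.mul_le_mul_left r (by omega)
        omega
      · apply Finset.disjoint_left.mpr
        intro x hx hx'
        rw [hBmem] at hx hx'
        have : r * (j+1) ≤ r * i := Nat.mul_le_mul_left r (by omega)
        omega
    have hBsub : ∀ i, i < t → ∀ y ∈ B i, m + 1 ≤ y ∧ y ≤ m + r * t := by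
      intro i hi y hy
      exact (hBunion y).mp ⟨i, hi, hy⟩
    refine ⟨P, ⟨?_, ?_⟩, ?_, Q, Finset.subset_union_right, ?_, ?_, ?_⟩
    · -- pairwise disjoint
      intro p hp q hq hpq
      rw [hmemP] at hp hq
      rcases hp with ⟨x, hx, rfl⟩ | ⟨i, hi, rfl⟩ <;>
        rcases hq with ⟨y, hy, rfl⟩ | ⟨j, hj, rfl⟩
      · simp only [Finset.disjoint_singleton]
        intro h; exact hpq (by rw [h])
      · rw [Finset.disjoint_singleton_left]
        intro hxB
        have := (hBsub j hj x hxB).1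
        simp at hx; omega
      · rw [Finset.disjoint_singleton_right]
        intro hyB
        have := (hBsub i hi y hyB).1
        simp at hy; omega
      · exact hBdisj i j (fun h => hpq (by rw [h]))
    · -- sup = Icc 1 n
      ext y
      rw [Finset.mem_sup]
      simp only [id_eq, Finset.mem_Icc]
      constructor
      · rintro ⟨p, hp, hyp⟩
        rw [hmemP] at hp
        rcases hp with ⟨x, hx, rfl⟩ | ⟨i, hi, rfl⟩
        · simp at hyp; subst hyp; simp at hx; omega
        · have := hBsub i hi y hyp; omega
      · rintro ⟨h1, h2⟩
        by_cases hym : y ≤ m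
        · exact ⟨{y}, (hmemP _).mpr (Or.inl ⟨y, by simp; omega, rfl⟩), by simp⟩
        · obtain ⟨i, hi, hyi⟩ := (hBunion y).mpr ⟨by omega, by omega⟩
          exact ⟨B i, (hmemP _).mpr (Or.inr ⟨i, hi, rfl⟩), hyi⟩
    · -- card ≤ r
      intro p hp
      rw [hmemP] at hp
      rcases hp with ⟨x, hx, rfl⟩ | ⟨i, hi, rfl⟩
      · simp; omega
      · rw [hBcard]
    · -- card Q = t
      rw [hQ, Finset.card_image_of_injOn, Finset.card_range]
      intro i hi j hj hij
      by_contra hne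
      have hd := hBdisj i j hne
      have e3 : r * (i + 1) = r * i + r := by ring
      have hmem : m + r * i + 1 ∈ B i := by
        rw [hBmem, e3]
        generalize r * i = u
        omega
      have hmem' : m + r * i + 1 ∈ B j := hij ▸ hmem
      exact Finset.disjoint_left.mp hd hmem hmem' 
    · -- parts of Q have card r
      intro p hp
      rw [hQ, Finset.mem_image] at hp
      obtain ⟨i, _, rfl⟩ := hp
      exact hBcard i
    · -- A ⊆ Q.sup id
      intro y hy
      simp only [Finset.mem_Icc] at hy
      rw [Finset.mem_sup]
      have hyt : m + 1 ≤ y ∧ y ≤ m + r * t := by omega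
      obtain ⟨i, hi, hyi⟩ := (hBunion y).mpr hyt
      exact ⟨B i, by rw [hQ]; exact Finset.mem_image_of_mem B (Finset.mem_range.mpr hi), hyi⟩
  · -- Second part
    intro P hP hPr Q hQP hQc hQr hAQ F hF hFc hAdm
    have hkey : (F ∩ Finset.Icc (n - a + 1) n).card ≤ k - s - 1 := by
      have hsub : F ∩ Finset.Icc (n - a + 1) n ⊆ Q.biUnion (fun p => F ∩ p) := by
        intro x hx
        rw [Finset.mem_inter] at hx
        have hx2 := hAQ hx.2
        rw [Finset.mem_sup] at hx2
        obtain ⟨p, hp, hxp⟩ := hx2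
        rw [Finset.mem_biUnion]
        exact ⟨p, hp, Finset.mem_inter.mpr ⟨hx.1, hxp⟩⟩
      calc (F ∩ Finset.Icc (n - a + 1) n).card
          ≤ (Q.biUnion (fun p => F ∩ p)).card := Finset.card_le_card hsub
        _ ≤ ∑ p ∈ Q, (F ∩ p).card := Finset.card_biUnion_le
        _ ≤ ∑ p ∈ Q, 1 := Finset.sum_le_sum (fun p hp => hAdm p (hQP hp))
        _ = k - s - 1 := by simp [hQc]
    have hnsub : ¬ subS s F (Finset.Icc (n - a + 1) n) := by
      rintro ⟨E, hE, hFE⟩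
      have h1 : F \ E ⊆ F ∩ Finset.Icc (n - a + 1) n :=
        Finset.subset_inter Finset.sdiff_subset hFE
      have h2 : F.card - E.card ≤ (F \ E).card := Finset.le_card_sdiff E F
      have h3 := Finset.card_le_card h1
      omega
    exact ⟨hkey, hnsub, hF, hFc, hnsub⟩
end
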